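/- Let R be a finite commutative chain ring with maximal ideal ⟨γ⟩, nilpotency index s, and residue field of size q, and set M = q/(q-1). Let C ⊆ R^n be a linear code of rank K with 1 ≤ K, and suppose C is MHD, i.e., d_Hom(C) > M·(n - K). Then the socle C_0 = C ∩ ⟨γ^{s-1}⟩^n satisfies |C_0| = q^K and every nonzero element of C_0 has Hamming weight at least n - K + 1 (equivalently, C_0 viewed over the residue field F_q is an MDS code of dimension K with minimum Hamming distance n - K + 1). -/

import Mathlib

open scoped BigOperators Classical

/-- The normalized homogeneous weight on a finite chain ring with maximal ideal `⟨γ⟩`,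
nilpotency index `s` and residue field of size `q`. -/
noncomputable def wtHom {R : Type*} [CommRing R] (γ : R) (s q : ℕ) (x : R) : ℚ :=
  if x = 0 then 0
  else if x ∈ Ideal.span {γ ^ (s - 1)} then (q : ℚ) / ((q : ℚ) - 1)
  else 1

/-- Homogeneous weight of a vector: the sum of the weights of its coordinates. -/
noncomputable def wtHomV {R : Type*} [CommRing R] (γ : R) (s q : ℕ) {n : ℕ}
    (v : Fin n → R) : ℚ :=
  ∑ i, wtHom γ s q (v i)

/-- Hamming weight of a vector: the number of nonzero coordinates. -/
noncomputable def hWt {R : Type*} [Zero R] {n : ℕ} (v : Fin n → R) : ℕ :=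
  Nat.card {i : Fin n // v i ≠ 0}

/-- `K` is the rank of the code `C`: the least cardinality of a generating set of `C`
as an `R`-module. -/
def IsCodeRank {R : Type*} [CommRing R] {n : ℕ} (C : Submodule R (Fin n → R)) (K : ℕ) : Prop :=
  IsLeast {k : ℕ | ∃ S : Finset (Fin n → R),
    S.card = k ∧ Submodule.span R (S : Set (Fin n → R)) = C} K

/-- The socle of a code: the codewords all of whose coordinates lie in `⟨γ^(s-1)⟩`. -/
def socleCode {R : Type*} [CommRing R] (γ : R) (s : ℕ) {n : ℕ}
    (C : Submodule R (Fin n → R)) : Submodule R (Fin n → R) :=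
  C ⊓ Submodule.pi Set.univ (fun _ : Fin n => Ideal.span {γ ^ (s - 1)})

lemma chain_ann {R : Type*} [CommRing R] [IsLocalRing R] (γ : R) (t : ℕ)
    (hmax : IsLocalRing.maximalIdeal R = Ideal.span {γ})
    (hnil' : γ ^ t ≠ 0) {x : R} (hx : γ * x = 0) :
    x ∈ Ideal.span {γ ^ t} := by
  have step : ∀ j, j ≤ t → x ∈ Ideal.span {γ ^ j} := by
    intro j
    induction j with
    | zero =>
      intro _
      rw [pow_zero, Ideal.span_singleton_one]
      exact Submodule.mem_top
    | succ j ih =>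
      intro hj
      obtain ⟨y, hy⟩ := Ideal.mem_span_singleton'.mp (ih (by omega))
      by_cases hu : IsUnit y
      · exfalso
        have h0 : (y : R) * γ ^ (j + 1) = 0 := by
          have : y * γ ^ (j + 1) = γ * (y * γ ^ j) := by ring
          rw [this, hy, hx]
        obtain ⟨u, rfl⟩ := hu
        have h1 : γ ^ (j + 1) = 0 := by
          have := congrArg (fun z => (↑u⁻¹ : R) * z) h0
          simpa [← mul_assoc] using this
        apply hnil'
        have ht : γ ^ t = γ ^ (j + 1) * γ ^ (t - (j + 1)) := by
          rw [← pow_add]; congr 1; omega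
        rw [ht, h1, zero_mul]
      · have hy' : y ∈ Ideal.span {γ} := by
          rw [← hmax]
          exact hu
        obtain ⟨z, hz⟩ := Ideal.mem_span_singleton'.mp hy'
        rw [Ideal.mem_span_singleton']
        refine ⟨z, ?_⟩
        rw [← hy, ← hz, pow_succ]; ring
  exact step t le_rfl

theorem mhd_socle_mds {R : Type*} [CommRing R] [IsLocalRing R] [Fintype R]
    (γ : R) (s q : ℕ) (hs : 1 ≤ s)
    (hmax : IsLocalRing.maximalIdeal R = Ideal.span {γ})
    (hnil : γ ^ s = 0) (hnil' : γ ^ (s - 1) ≠ 0)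
    (hq : Nat.card (R ⧸ IsLocalRing.maximalIdeal R) = q)
    {n : ℕ} (C : Submodule R (Fin n → R)) (K : ℕ) (hK1 : 1 ≤ K)
    (hK : IsCodeRank C K)
    (hMHD : ∀ c ∈ C, c ≠ 0 →
      (q : ℚ) / ((q : ℚ) - 1) * ((n : ℚ) - (K : ℚ)) < wtHomV γ s q c) :
    Nat.card (socleCode γ s C) = q ^ K ∧
      ∀ c ∈ socleCode γ s C, c ≠ 0 → n - K + 1 ≤ hWt c := by
  -- basic setup
  letI : Field (R ⧸ IsLocalRing.maximalIdeal R) := Ideal.Quotient.field _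
  haveI : Finite (R ⧸ IsLocalRing.maximalIdeal R) :=
    Finite.of_surjective _ Ideal.Quotient.mk_surjective
  have hq2 : 2 ≤ q := by
    rw [← hq]
    exact Finite.one_lt_card
  have hMpos : 0 < (q : ℚ) / ((q : ℚ) - 1) := by
    have h1 : (1:ℚ) < (q:ℚ) := by exact_mod_cast hq2
    exact div_pos (by linarith) (by linarith)
  have hts : s - 1 + 1 = s := by omega
  -- coordinates of socle elements
  have hsoc_coord : ∀ c ∈ socleCode γ s C, ∀ i, c i ∈ Ideal.span {γ ^ (s - 1)} := by
    intro c hc i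
    exact (Submodule.mem_pi.mp hc.2) i trivial
  have hsoc_smul : ∀ c ∈ socleCode γ s C, γ • c = 0 := by
    intro c hc
    funext i
    obtain ⟨y, hy⟩ := Ideal.mem_span_singleton'.mp (hsoc_coord c hc i)
    show γ * c i = 0
    rw [← hy]
    calc γ * (y * γ ^ (s-1)) = y * γ ^ (s - 1 + 1) := by rw [pow_succ]; ring
      _ = 0 := by rw [hts, hnil, mul_zero]
  -- PART B : the distance bound
  have partB : ∀ c ∈ socleCode γ s C, c ≠ 0 → n - K + 1 ≤ hWt c := by
    intro c hc hc0
    have hwt : wtHomV γ s q c = ((hWt c : ℚ)) * ((q : ℚ) / ((q : ℚ) - 1)) := by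
      have h1 : ∀ i, wtHom γ s q (c i) =
          if c i = 0 then 0 else (q : ℚ) / ((q : ℚ) - 1) := by
        intro i
        by_cases h : c i = 0 <;> simp [wtHom, h, hsoc_coord c hc i]
      have h2 : hWt c = (Finset.univ.filter fun i => ¬ c i = 0).card := by
        rw [hWt, Nat.card_eq_fintype_card, Fintype.card_subtype]
      rw [wtHomV]
      simp only [h1]
      rw [Finset.sum_ite, Finset.sum_const_zero, Finset.sum_const, zero_add,
        nsmul_eq_mul, h2]
    have hlt := hMHD c hc.1 hc0
    rw [hwt] at hlt
    have hrat : (n : ℚ) - K < (hWt c : ℚ) := by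
      nlinarith [hlt, hMpos]
    have h1le : 1 ≤ hWt c := by
      have : ∃ i, c i ≠ 0 := by
        by_contra h
        push_neg at h
        exact hc0 (funext h)
      obtain ⟨i, hi⟩ := this
      have : 0 < Nat.card {i : Fin n // c i ≠ 0} :=
        Nat.card_pos_iff.mpr ⟨⟨⟨i, hi⟩⟩, inferInstance⟩
      exact this
    have hn : n < hWt c + K := by
      have : (n : ℚ) < (hWt c : ℚ) + K := by linarith
      exact_mod_cast this
    omega
  refine ⟨?_, partB⟩
  -- PART A : cardinality of the socle
  let h : ↥C →ₗ[R] (Fin n → R) := γ • C.subtype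
  have happ : ∀ x : ↥C, h x = γ • (x : Fin n → R) := fun x => rfl
  let W : Submodule R (Fin n → R) := LinearMap.range h
  have hWC : W ≤ C := by
    rintro x ⟨c, rfl⟩
    exact C.smul_mem γ c.2
  have hmemW : ∀ x, x ∈ W ↔ ∃ c, c ∈ C ∧ γ • c = x := by
    intro x
    constructor
    · rintro ⟨c, rfl⟩; exact ⟨c, c.2, rfl⟩
    · rintro ⟨c, hc, rfl⟩; exact ⟨⟨c, hc⟩, rfl⟩
  have hker : ∀ x : ↥C, h x = 0 ↔ (x : Fin n → R) ∈ socleCode γ s C := by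
    intro x
    constructor
    · intro hx
      refine ⟨x.2, Submodule.mem_pi.mpr fun i _ => ?_⟩
      apply chain_ann γ (s - 1) hmax hnil'
      have h0 := congrFun hx i
      simpa [happ] using h0
    · intro hx
      rw [happ]
      exact hsoc_smul _ hx
  have e1 : Nat.card (socleCode γ s C) = Nat.card (LinearMap.ker h) := by
    apply Nat.card_congr
    refine ⟨fun x => ⟨⟨x.1, x.2.1⟩, (LinearMap.mem_ker).mpr ((hker _).mpr x.2)⟩,
      fun y => ⟨y.1.1, (hker _).mp ((LinearMap.mem_ker).mp y.2)⟩, ?_, ?_⟩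
    · intro x; rfl
    · intro y; rfl
  let ψ : ↥C →ₗ[R] ((Fin n → R) ⧸ W) := W.mkQ.comp C.subtype
  have hcard1 : Nat.card ↥C = Nat.card W * Nat.card (LinearMap.ker h) := by
    rw [Submodule.card_eq_card_quotient_mul_card (LinearMap.ker h)]
    have e := Nat.card_congr h.quotKerEquivRange.toEquiv
    rw [e]
    exact Nat.mul_comm _ _
  have hrangeψ : LinearMap.range ψ = Submodule.map W.mkQ C := by
    rw [LinearMap.range_comp, Submodule.range_subtype]
  have hcard2 : Nat.card ↥C
      = Nat.card (Submodule.map W.mkQ C) * Nat.card W := by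
    rw [Submodule.card_eq_card_quotient_mul_card (LinearMap.ker ψ)]
    have e1' : Nat.card (↥C ⧸ LinearMap.ker ψ)
        = Nat.card (Submodule.map W.mkQ C) := by
      rw [← hrangeψ]
      exact Nat.card_congr ψ.quotKerEquivRange.toEquiv
    have e2' : Nat.card (LinearMap.ker ψ) = Nat.card W := by
      have hkerψ : LinearMap.ker ψ = Submodule.comap C.subtype W := by
        rw [LinearMap.ker_comp, Submodule.ker_mkQ]
      rw [hkerψ]
      exact Nat.card_congr (Submodule.comapSubtypeEquivOfLe hWC).toEquiv
    rw [e1', e2']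
    exact Nat.mul_comm _ _
  have hWpos : 0 < Nat.card W :=
    Nat.card_pos_iff.mpr ⟨⟨⟨0, W.zero_mem⟩⟩, inferInstance⟩
  have ecard : Nat.card (socleCode γ s C)
      = Nat.card (Submodule.map W.mkQ C) := by
    rw [e1]
    apply Nat.eq_of_mul_eq_mul_left hWpos
    rw [← hcard1, hcard2, Nat.mul_comm]
  -- the quotient as a vector space over the residue field
  have hT : Module.IsTorsionBySet R ↥(Submodule.map W.mkQ C)
      ((IsLocalRing.maximalIdeal R : Ideal R) : Set R) := by
    rintro ⟨v, hv⟩ ⟨a, ha⟩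
    obtain ⟨c, hc, rfl⟩ := hv
    have ha' : a ∈ Ideal.span {γ} := hmax ▸ ha
    obtain ⟨r, rfl⟩ := Ideal.mem_span_singleton'.mp ha' 
    apply Subtype.ext
    show (r * γ) • (W.mkQ c) = (0 : (Fin n → R) ⧸ W)
    rw [← map_smul, Submodule.mkQ_apply, Submodule.Quotient.mk_eq_zero, mul_smul]
    exact W.smul_mem r ((hmemW _).mpr ⟨c, hc, rfl⟩)
  letI : Module (R ⧸ IsLocalRing.maximalIdeal R) ↥(Submodule.map W.mkQ C) :=
    hT.module
  have hsmul : ∀ (r : R) (v : ↥(Submodule.map W.mkQ C)),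
      (Ideal.Quotient.mk (IsLocalRing.maximalIdeal R) r) • v = r • v :=
    fun r v => hT.mk_smul r v
  obtain ⟨S, hScard, hSspan⟩ := hK.1
  let lift : (Fin n → R) → ↥(Submodule.map W.mkQ C) := fun m =>
    if hm : W.mkQ m ∈ Submodule.map W.mkQ C then ⟨W.mkQ m, hm⟩ else 0
  have hliftval : ∀ (m) (hm : W.mkQ m ∈ Submodule.map W.mkQ C),
      lift m = ⟨W.mkQ m, hm⟩ := fun m hm => dif_pos hm
  have hspanV : Submodule.span (R ⧸ IsLocalRing.maximalIdeal R)
      (lift '' ↑S) = ⊤ := by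
    have hgen : ∀ c', c' ∈ Submodule.span R (S : Set (Fin n → R)) →
        ∀ hm : W.mkQ c' ∈ Submodule.map W.mkQ C,
        (⟨W.mkQ c', hm⟩ : ↥(Submodule.map W.mkQ C)) ∈
          Submodule.span (R ⧸ IsLocalRing.maximalIdeal R) (lift '' ↑S) := by
      intro c' hc'
      induction hc' using Submodule.span_induction with
      | mem x hx =>
        intro hm
        exact Submodule.subset_span ⟨x, hx, hliftval x hm⟩
      | zero =>
        intro hm
        have h0 : (⟨W.mkQ 0, hm⟩ : ↥(Submodule.map W.mkQ C)) = 0 :=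
          Subtype.ext (map_zero W.mkQ)
        rw [h0]
        exact Submodule.zero_mem _
      | add x y hx hy ihx ihy =>
        intro hm
        have hmx : W.mkQ x ∈ Submodule.map W.mkQ C :=
          Submodule.mem_map_of_mem (hSspan ▸ hx)
        have hmy : W.mkQ y ∈ Submodule.map W.mkQ C :=
          Submodule.mem_map_of_mem (hSspan ▸ hy)
        have hadd : (⟨W.mkQ (x + y), hm⟩ : ↥(Submodule.map W.mkQ C))
            = ⟨W.mkQ x, hmx⟩ + ⟨W.mkQ y, hmy⟩ :=
          Subtype.ext (map_add W.mkQ x y)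
        rw [hadd]
        exact add_mem (ihx hmx) (ihy hmy)
      | smul r x hx ihx =>
        intro hm
        have hmx : W.mkQ x ∈ Submodule.map W.mkQ C :=
          Submodule.mem_map_of_mem (hSspan ▸ hx)
        have hsm : (⟨W.mkQ (r • x), hm⟩ : ↥(Submodule.map W.mkQ C))
            = r • (⟨W.mkQ x, hmx⟩ : ↥(Submodule.map W.mkQ C)) :=
          Subtype.ext (map_smul W.mkQ r x)
        rw [hsm, ← hsmul r]
        exact Submodule.smul_mem _ _ (ihx hmx)
    rw [eq_top_iff]
    rintro x -
    obtain ⟨c, hc, hceq⟩ := x.2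
    have hx' : x = ⟨W.mkQ c, Submodule.mem_map_of_mem hc⟩ :=
      Subtype.ext hceq.symm
    rw [hx']
    exact hgen c (hSspan ▸ hc) _
  haveI : Finite ((Fin n → R) ⧸ W) :=
    Finite.of_surjective _ (Submodule.mkQ_surjective W)
  letI : Fintype ↥(Submodule.map W.mkQ C) := Fintype.ofFinite _
  have hfr_le : Module.finrank (R ⧸ IsLocalRing.maximalIdeal R)
      ↥(Submodule.map W.mkQ C) ≤ K := by
    have h4 : Module.finrank (R ⧸ IsLocalRing.maximalIdeal R)
        ↥(Submodule.map W.mkQ C)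
        = Module.finrank (R ⧸ IsLocalRing.maximalIdeal R)
          ↥(Submodule.span (R ⧸ IsLocalRing.maximalIdeal R) (lift '' ↑S)) := by
      rw [hspanV, finrank_top]
    have h2 := finrank_span_le_card (R := R ⧸ IsLocalRing.maximalIdeal R)
      (lift '' (↑S : Set (Fin n → R)))
    have h3 : (lift '' (↑S : Set (Fin n → R))).toFinset.card ≤ S.card := by
      rw [Set.toFinset_image, Finset.toFinset_coe]
      exact Finset.card_image_le
    rw [h4]
    exact (h2.trans h3).trans_eq hScard
  haveI : Module.Finite (R ⧸ IsLocalRing.maximalIdeal R)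
      ↥(Submodule.map W.mkQ C) := Module.Finite.of_finite
  let b := Module.finBasis (R ⧸ IsLocalRing.maximalIdeal R)
    ↥(Submodule.map W.mkQ C)
  have hb : ∀ i, ∃ cx, cx ∈ C ∧ W.mkQ cx = ((b i : ↥(Submodule.map W.mkQ C)) :
      (Fin n → R) ⧸ W) := by
    intro i
    obtain ⟨cx, hcx, hmk⟩ := (b i).2
    exact ⟨cx, hcx, hmk⟩
  choose cf hcf hcfmk using hb
  have claim1 : ∀ x ∈ C, ∃ p ∈ Submodule.span R (Set.range cf),
      ∃ y ∈ C, x = p + γ • y := by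
    intro x hx
    set v : ↥(Submodule.map W.mkQ C) := ⟨W.mkQ x, Submodule.mem_map_of_mem hx⟩
      with hv
    have hrepr := b.sum_repr v
    choose a ha using fun i =>
      Ideal.Quotient.mk_surjective (I := IsLocalRing.maximalIdeal R) (b.repr v i)
    set p := ∑ i, a i • cf i with hp
    have hpP : p ∈ Submodule.span R (Set.range cf) :=
      Submodule.sum_mem _
        (fun i _ => Submodule.smul_mem _ _ (Submodule.subset_span ⟨i, rfl⟩))
    have h2 : ∀ i, W.mkQ (a i • cf i)
        = ((b.repr v i • b i : ↥(Submodule.map W.mkQ C)) : (Fin n → R) ⧸ W) := by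
      intro i
      rw [map_smul, hcfmk i, ← ha i, hsmul (a i) (b i)]
      rfl
    have hmkp : W.mkQ p = W.mkQ x := by
      calc W.mkQ p = ∑ i, W.mkQ (a i • cf i) := by rw [hp, map_sum]
        _ = ∑ i, ((b.repr v i • b i : ↥(Submodule.map W.mkQ C)) :
            (Fin n → R) ⧸ W) := Finset.sum_congr rfl (fun i _ => h2 i)
        _ = ((∑ i, b.repr v i • b i : ↥(Submodule.map W.mkQ C)) :
            (Fin n → R) ⧸ W) := (AddSubmonoidClass.coe_finset_sum _ _).symm
        _ = (v : (Fin n → R) ⧸ W) := by rw [hrepr]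
        _ = W.mkQ x := rfl
    have hxw : x - p ∈ W := by
      have hz : W.mkQ (x - p) = 0 := by rw [map_sub, hmkp, sub_self]
      rwa [Submodule.mkQ_apply, Submodule.Quotient.mk_eq_zero] at hz
    obtain ⟨cc, hcc, hcceq⟩ := (hmemW _).mp hxw
    exact ⟨p, hpP, cc, hcc, by rw [hcceq]; abel⟩
  have claim2 : ∀ t : ℕ, ∀ x ∈ C, ∃ p ∈ Submodule.span R (Set.range cf),
      ∃ y ∈ C, x = p + γ ^ t • y := by
    intro t
    induction t with
    | zero => exact fun x hx => ⟨0, Submodule.zero_mem _, x, hx, by simp⟩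
    | succ t iht =>
      intro x hx
      obtain ⟨p, hp, y, hy, rfl⟩ := iht x hx
      obtain ⟨p', hp', y', hy', hy'eq⟩ := claim1 y hy
      refine ⟨p + γ ^ t • p', add_mem hp (Submodule.smul_mem _ _ hp'), y', hy', ?_⟩
      rw [hy'eq, smul_add, smul_smul, ← pow_succ]
      abel
  have hCeq : C = Submodule.span R (Set.range cf) := by
    apply le_antisymm
    · intro x hx
      obtain ⟨p, hp, y, hy, hxe⟩ := claim2 s x hx
      rw [hnil, zero_smul, add_zero] at hxe
      exact hxe ▸ hp
    · rw [Submodule.span_le]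
      rintro x ⟨i, rfl⟩
      exact hcf i
  have hK_le : K ≤ Module.finrank (R ⧸ IsLocalRing.maximalIdeal R)
      ↥(Submodule.map W.mkQ C) := by
    have hmem : (Finset.univ.image cf).card ∈ {k : ℕ |
        ∃ S : Finset (Fin n → R), S.card = k ∧
          Submodule.span R (S : Set (Fin n → R)) = C} := by
      refine ⟨Finset.univ.image cf, rfl, ?_⟩
      rw [Finset.coe_image, Finset.coe_univ, Set.image_univ, ← hCeq]
    calc K ≤ (Finset.univ.image cf).card := hK.2 hmem
      _ ≤ Finset.univ.card := Finset.card_image_le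
      _ = _ := by rw [Finset.card_univ, Fintype.card_fin]
  have hd : Module.finrank (R ⧸ IsLocalRing.maximalIdeal R)
      ↥(Submodule.map W.mkQ C) = K := le_antisymm hfr_le hK_le
  letI : Fintype (R ⧸ IsLocalRing.maximalIdeal R) := Fintype.ofFinite _
  have hfin : Fintype.card ↥(Submodule.map W.mkQ C)
      = Fintype.card (R ⧸ IsLocalRing.maximalIdeal R)
        ^ Module.finrank (R ⧸ IsLocalRing.maximalIdeal R)
          ↥(Submodule.map W.mkQ C) := Module.card_eq_pow_finrank
  rw [ecard, Nat.card_eq_fintype_card, hfin, hd, ← hq, Nat.card_eq_fintype_card]
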